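/- Let Q₁ be a real k×k matrix and Q₂ a real (p−k)×k matrix with k‖Q₁‖_max < 1, let F = (I_k − Q₁)(I_k + Q₁)⁻¹ (defined since ‖Q₁‖_F ≤ k‖Q₁‖_max < 1 makes I_k + Q₁ invertible), and let A = ½ Q₂ (I_k + F). Then ‖Q₂ − A‖_max ≤ k ‖Q₂‖_max ‖Q₁‖_max / (1 − k‖Q₁‖_max); in particular ‖Q₂ − A‖_max ≤ k · max(‖Q₁‖_max, ‖Q₂‖_max)² / (1 − k‖Q₁‖_max). -/
import Mathlib


open Matrix MeasureTheory Filter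
open scoped Kronecker ENNReal

noncomputable section

/-- The `p × k` matrix whose top `k × k` block is the identity and whose
remaining entries are zero. -/
def Ipk (p k : ℕ) : Matrix (Fin p) (Fin k) ℝ :=
  Matrix.of fun i j => if (i : ℕ) = (j : ℕ) then 1 else 0

/-- The (modified) Cayley transform `C(X) = (I + X)(I - X)⁻¹ I_{p×k}`. -/
def cayley (p k : ℕ) (X : Matrix (Fin p) (Fin p) ℝ) : Matrix (Fin p) (Fin k) ℝ :=
  (1 + X) * (1 - X)⁻¹ * Ipk p k

/-- Top `k × k` block of a `p × k` matrix. -/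
def topBlock {p k : ℕ} (h : k ≤ p) (Q : Matrix (Fin p) (Fin k) ℝ) :
    Matrix (Fin k) (Fin k) ℝ :=
  Q.submatrix (Fin.castLE h) id

/-- Bottom `(p-k) × k` block of a `p × k` matrix. -/
def botBlock {p k : ℕ} (h : k ≤ p) (Q : Matrix (Fin p) (Fin k) ℝ) :
    Matrix (Fin (p - k)) (Fin k) ℝ :=
  Q.submatrix (fun i => ⟨k + i.1, by have := i.isLt; omega⟩) id

/-- The skew-symmetric block matrix `[[B, -Aᵀ], [A, 0]]` as a `p × p` matrix. -/
def blockX {p k : ℕ} (h : k ≤ p) (B : Matrix (Fin k) (Fin k) ℝ)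
    (A : Matrix (Fin (p - k)) (Fin k) ℝ) : Matrix (Fin p) (Fin p) ℝ :=
  (Matrix.fromBlocks B (-Aᵀ) A 0).submatrix
    (fun i => finSumFinEquiv.symm (Fin.cast (by omega) i))
    (fun j => finSumFinEquiv.symm (Fin.cast (by omega) j))

/-- Position of the strictly subdiagonal entry `(i, j)` (`j < i`) of a `k × k`
matrix in the column-major enumeration of the strictly subdiagonal entries. -/
def lowIdx (k i j : ℕ) : ℕ := j * k + i - (j + 1) * (j + 2) / 2

/-- The `k × k` skew-symmetric matrix whose strictly subdiagonal entries, in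
column-major order, are given by `b`. -/
def skewOfVec (k : ℕ) (b : Fin (k * (k - 1) / 2) → ℝ) : Matrix (Fin k) (Fin k) ℝ :=
  Matrix.of fun i j =>
    if (j : ℕ) < (i : ℕ) then
      if h : lowIdx k i j < k * (k - 1) / 2 then b ⟨lowIdx k i j, h⟩ else 0
    else if (i : ℕ) < (j : ℕ) then
      if h : lowIdx k j i < k * (k - 1) / 2 then -b ⟨lowIdx k j i, h⟩ else 0
    else 0

/-- The vector of strictly subdiagonal entries of a `k × k` matrix, in
column-major order. -/
def subdiagVec {k : ℕ} (M : Matrix (Fin k) (Fin k) ℝ) : Fin (k * (k - 1) / 2) → ℝ :=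
  fun t => ∑ i : Fin k, ∑ j : Fin k,
    if (j : ℕ) < (i : ℕ) ∧ lowIdx k (i : ℕ) (j : ℕ) = (t : ℕ) then M i j else 0

/-- Column-major vectorization of an `a × b` matrix, indexed by
(column, row) pairs. -/
def vecP {a b : ℕ} (M : Matrix (Fin a) (Fin b) ℝ) : Fin b × Fin a → ℝ :=
  fun q => M q.2 q.1

/-- The max-norm of a matrix: the maximum of the absolute values of its
entries. -/
def maxNorm {a b : ℕ} (M : Matrix (Fin a) (Fin b) ℝ) : ℝ :=
  ⨆ q : Fin a × Fin b, |M q.1 q.2|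

/-- The Frobenius norm of a matrix. -/
def frobNorm {a b : ℕ} (M : Matrix (Fin a) (Fin b) ℝ) : ℝ :=
  Real.sqrt (∑ i, ∑ j, (M i j) ^ 2)



attribute [local instance] Matrix.linftyOpNormedRing Matrix.linftyOpNormedAddCommGroup
  Matrix.linftyOpNormedSpace

lemma abs_le_maxNorm {a b : ℕ} (M : Matrix (Fin a) (Fin b) ℝ) (i : Fin a) (j : Fin b) :
    |M i j| ≤ maxNorm M :=
  le_ciSup (f := fun q : Fin a × Fin b => |M q.1 q.2|)
    (Set.Finite.bddAbove (Set.finite_range _)) (i, j)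

lemma maxNorm_nonneg' {a b : ℕ} (ha : 0 < a) (hb : 0 < b) (M : Matrix (Fin a) (Fin b) ℝ) :
    0 ≤ maxNorm M :=
  le_trans (abs_nonneg _) (abs_le_maxNorm M ⟨0, ha⟩ ⟨0, hb⟩)

lemma maxNorm_le' {a b : ℕ} {M : Matrix (Fin a) (Fin b) ℝ} {c : ℝ}
    (ha : 0 < a) (hb : 0 < b) (h : ∀ i j, |M i j| ≤ c) : maxNorm M ≤ c := by
  haveI : Nonempty (Fin a × Fin b) := ⟨(⟨0, ha⟩, ⟨0, hb⟩)⟩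
  exact ciSup_le fun q => h q.1 q.2

lemma maxNorm_mul_le {a b c : ℕ} (ha : 0 < a) (hb : 0 < b) (hc : 0 < c)
    (A : Matrix (Fin a) (Fin b) ℝ) (B : Matrix (Fin b) (Fin c) ℝ) :
    maxNorm (A * B) ≤ (b : ℝ) * maxNorm A * maxNorm B := by
  apply maxNorm_le' ha hc
  intro i j
  calc |(A * B) i j| ≤ ∑ l : Fin b, |A i l| * |B l j| := by
        rw [Matrix.mul_apply]
        exact (Finset.abs_sum_le_sum_abs _ _).trans (le_of_eq (by simp [abs_mul]))
    _ ≤ ∑ l : Fin b, maxNorm A * maxNorm B :=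
        Finset.sum_le_sum fun l _ =>
          mul_le_mul (abs_le_maxNorm A i l) (abs_le_maxNorm B l j) (abs_nonneg _)
            (maxNorm_nonneg' ha hb A)
    _ = (b : ℝ) * maxNorm A * maxNorm B := by simp [mul_assoc]

lemma maxNorm_sub_le' {a b : ℕ} (ha : 0 < a) (hb : 0 < b)
    (A B : Matrix (Fin a) (Fin b) ℝ) :
    maxNorm (A - B) ≤ maxNorm A + maxNorm B := by
  apply maxNorm_le' ha hb
  intro i j
  calc |(A - B) i j| ≤ |A i j| + |B i j| := by
        simpa [Matrix.sub_apply] using abs_sub (A i j) (B i j)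
    _ ≤ _ := add_le_add (abs_le_maxNorm A i j) (abs_le_maxNorm B i j)

/-- Bound on the error of the approximation `Q₂` to `A = ½ Q₂ (I + F)`,
where `F = (I - Q₁)(I + Q₁)⁻¹`, when `k‖Q₁‖_max < 1`. -/
theorem A_approx_bound (p k : ℕ) (hk : 0 < k) (hkp : k < p)
    (Q₁ : Matrix (Fin k) (Fin k) ℝ) (Q₂ : Matrix (Fin (p - k)) (Fin k) ℝ)
    (h : (k : ℝ) * maxNorm Q₁ < 1) :
    IsUnit (1 + Q₁) ∧
    maxNorm (Q₂ - (1 / 2 : ℝ) • (Q₂ * (1 + (1 - Q₁) * (1 + Q₁)⁻¹)))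
      ≤ (k : ℝ) * maxNorm Q₂ * maxNorm Q₁ / (1 - (k : ℝ) * maxNorm Q₁) ∧
    maxNorm (Q₂ - (1 / 2 : ℝ) • (Q₂ * (1 + (1 - Q₁) * (1 + Q₁)⁻¹)))
      ≤ (k : ℝ) * max (maxNorm Q₁) (maxNorm Q₂) ^ 2 / (1 - (k : ℝ) * maxNorm Q₁) := by
  have hkpos : (0:ℝ) < k := Nat.cast_pos.mpr hk
  have hpk : 0 < p - k := by omega
  have hQ1n := maxNorm_nonneg' hk hk Q₁
  have hQ2n := maxNorm_nonneg' hpk hk Q₂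
  have hden : (0:ℝ) < 1 - (k:ℝ) * maxNorm Q₁ := by linarith
  -- invertibility via linfty operator norm
  haveI : CompleteSpace (Matrix (Fin k) (Fin k) ℝ) := FiniteDimensional.complete ℝ _
  have hnorm : ‖Q₁‖ < 1 := by
    rw [Matrix.linfty_opNorm_def]
    have hsup : (Finset.univ.sup fun i : Fin k => ∑ j, ‖Q₁ i j‖₊)
        ≤ Real.toNNReal ((k:ℝ) * maxNorm Q₁) := by
      apply Finset.sup_le
      intro i _
      rw [← NNReal.coe_le_coe, NNReal.coe_sum, Real.coe_toNNReal _ (by positivity)]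
      calc ∑ j, ((‖Q₁ i j‖₊ : ℝ)) = ∑ j : Fin k, |Q₁ i j| := by
            simp [Real.norm_eq_abs]
        _ ≤ ∑ _j : Fin k, maxNorm Q₁ :=
            Finset.sum_le_sum fun j _ => abs_le_maxNorm Q₁ i j
        _ = (k:ℝ) * maxNorm Q₁ := by simp [mul_comm]
    calc ((Finset.univ.sup fun i : Fin k => ∑ j, ‖Q₁ i j‖₊ : NNReal) : ℝ)
        ≤ ((Real.toNNReal ((k:ℝ) * maxNorm Q₁) : NNReal) : ℝ) := NNReal.coe_le_coe.mpr hsup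
      _ = (k:ℝ) * maxNorm Q₁ := Real.coe_toNNReal _ (by positivity)
      _ < 1 := h
  have hunit : IsUnit (1 + Q₁) := by
    have := (Units.oneSub (-Q₁) (by simpa using hnorm)).isUnit
    simpa [sub_neg_eq_add] using this
  refine ⟨hunit, ?_⟩
  have hdet : IsUnit (1 + Q₁).det := (Matrix.isUnit_iff_isUnit_det _).mp hunit
  have hmulinv : (1 + Q₁) * (1 + Q₁)⁻¹ = 1 := Matrix.mul_nonsing_inv _ hdet
  set M : Matrix (Fin k) (Fin k) ℝ := Q₁ * (1 + Q₁)⁻¹ with hM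
  have hD : Q₂ - (1 / 2 : ℝ) • (Q₂ * (1 + (1 - Q₁) * (1 + Q₁)⁻¹)) = Q₂ * M := by
    have e : (1 - Q₁) * (1 + Q₁)⁻¹ = 1 - (2:ℝ) • M := by
      have e1 : (1 - Q₁ : Matrix (Fin k) (Fin k) ℝ) = (1 + Q₁) - (2:ℝ) • Q₁ := by
        rw [two_smul]; abel
      rw [e1, Matrix.sub_mul, hmulinv, smul_mul_assoc, hM]
    have e2 : (1 : Matrix (Fin k) (Fin k) ℝ) + (1 - Q₁) * (1 + Q₁)⁻¹
        = (2:ℝ) • (1 - M) := by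
      rw [e, two_smul, two_smul]; abel
    rw [e2, Matrix.mul_smul, smul_smul]
    norm_num
    rw [Matrix.mul_sub, Matrix.mul_one]
    abel
  rw [hD]
  have hMid : M = Q₁ - Q₁ * M := by
    have h2 : Q₁ - Q₁ * M = (Q₁ * (1 + Q₁) - Q₁ * Q₁) * (1 + Q₁)⁻¹ := by
      rw [Matrix.sub_mul, Matrix.mul_assoc, hmulinv, Matrix.mul_one, hM, Matrix.mul_assoc]
    rw [h2, Matrix.mul_add, Matrix.mul_one, add_sub_cancel_right]
  have hMn := maxNorm_nonneg' hk hk M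
  have hMbound : maxNorm M ≤ maxNorm Q₁ / (1 - (k:ℝ) * maxNorm Q₁) := by
    have h3 : maxNorm M ≤ maxNorm Q₁ + (k:ℝ) * maxNorm Q₁ * maxNorm M := by
      calc maxNorm M = maxNorm (Q₁ - Q₁ * M) := by rw [← hMid]
        _ ≤ maxNorm Q₁ + maxNorm (Q₁ * M) := maxNorm_sub_le' hk hk _ _
        _ ≤ maxNorm Q₁ + (k:ℝ) * maxNorm Q₁ * maxNorm M := by
            linarith [maxNorm_mul_le hk hk hk Q₁ M]
    rw [le_div_iff₀ hden]
    nlinarith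
  have hfinal : maxNorm (Q₂ * M)
      ≤ (k:ℝ) * maxNorm Q₂ * maxNorm Q₁ / (1 - (k:ℝ) * maxNorm Q₁) := by
    calc maxNorm (Q₂ * M) ≤ (k:ℝ) * maxNorm Q₂ * maxNorm M :=
          maxNorm_mul_le hpk hk hk Q₂ M
      _ ≤ (k:ℝ) * maxNorm Q₂ * (maxNorm Q₁ / (1 - (k:ℝ) * maxNorm Q₁)) :=
          mul_le_mul_of_nonneg_left hMbound (by positivity)
      _ = (k:ℝ) * maxNorm Q₂ * maxNorm Q₁ / (1 - (k:ℝ) * maxNorm Q₁) := by ring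
  refine ⟨hfinal, hfinal.trans ?_⟩
  have hmax1 : maxNorm Q₁ ≤ max (maxNorm Q₁) (maxNorm Q₂) := le_max_left _ _
  have hmax2 : maxNorm Q₂ ≤ max (maxNorm Q₁) (maxNorm Q₂) := le_max_right _ _
  have hm1 := le_max_left (maxNorm Q₁) (maxNorm Q₂)
  have hm2 := le_max_right (maxNorm Q₁) (maxNorm Q₂)
  rw [div_le_div_iff_of_pos_right hden]
  nlinarith [mul_le_mul hm2 hm1 hQ1n (hQ2n.trans hm2)]


end
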